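/- Let G be an uncountable abelian Polish group with a compatible translation-invariant complete metric d. Then G has a good sequence: there exists a sequence (t_k) of distinct points of G with ∑_k d(0, t_k) < ∞ such that the map σ ↦ p(σ) = ∑_{k=1}^∞ σ(k)·t_k is injective on {0,1}^ℕ. -/

import Mathlib

open Set TopologicalSpace

set_option maxHeartbeats 1000000
/-- Every uncountable abelian Polish group `G` (with a compatible
translation-invariant complete metric) has a good sequence: a sequence `(t k)` of distinct
points with `∑ₖ d(0, t k) < ∞` such that `σ ↦ p(σ) = ∑ₖ σ(k)·t k` is injective on
`{0,1}^ℕ`. -/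
theorem stmt_13 {G : Type*} [AddCommGroup G] [MetricSpace G] [CompleteSpace G]
    [SeparableSpace G] [IsTopologicalAddGroup G] [Uncountable G]
    (hinv : ∀ a b u : G, dist (a + u) (b + u) = dist a b) :
    ∃ t : ℕ → G, Function.Injective t ∧ (Summable fun k => dist (0 : G) (t k)) ∧
      Function.Injective (fun σ : ℕ → Bool => ∑' k, if σ k then t k else (0 : G)) := by
  classical
  -- basic "norm" facts for the invariant metric
  have Nneg : ∀ x : G, dist (0 : G) (-x) = dist 0 x := by
    intro x
    have h := hinv 0 (-x) x
    simpa [dist_comm] using h.symm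
  have Nadd : ∀ a b : G, dist (0 : G) (a + b) ≤ dist 0 a + dist 0 b := by
    intro a b
    have h : dist a (a + b) = dist (0 : G) b := by
      have h2 := hinv 0 b a
      rw [zero_add, add_comm b a] at h2
      exact h2
    calc dist (0 : G) (a + b) ≤ dist 0 a + dist a (a + b) := dist_triangle _ _ _
      _ = dist 0 a + dist 0 b := by rw [h]
  have Nsum : ∀ (s : Finset ℕ) (f : ℕ → G),
      dist (0 : G) (∑ i ∈ s, f i) ≤ ∑ i ∈ s, dist (0 : G) (f i) := by
    intro s f
    induction s using Finset.cons_induction with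
    | empty => simp
    | cons i s hi ih =>
      simp only [Finset.sum_cons]
      exact le_trans (Nadd _ _) (by linarith)
  have dsub : ∀ a b c d : G, dist (a - b) (c - d) ≤ dist a c + dist b d := by
    intro a b c d
    have h1 : dist (a - b) (c - b) = dist a c := by
      simpa [sub_eq_add_neg] using hinv a c (-b)
    have e2 : dist (-b : G) (-d) = dist b d := by
      calc dist (-b : G) (-d) = dist (-b + (b + d)) (-d + (b + d)) := (hinv _ _ _).symm
        _ = dist d b := by rw [neg_add_cancel_left, add_comm b d, neg_add_cancel_left]
        _ = dist b d := dist_comm _ _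
    have h2 : dist (c - b) (c - d) = dist b d := by
      have e1 := hinv (-b) (-d) c
      calc dist (c - b) (c - d) = dist (-b + c) (-d + c) := by
            rw [sub_eq_add_neg, sub_eq_add_neg, add_comm c (-b), add_comm c (-d)]
        _ = dist (-b : G) (-d) := e1
        _ = dist b d := e2
    calc dist (a - b) (c - d) ≤ dist (a - b) (c - b) + dist (c - b) (c - d) := dist_triangle _ _ _
      _ = dist a c + dist b d := by rw [h1, h2]
  haveI : IsUniformAddGroup G := by
    constructor
    rw [Metric.uniformContinuous_iff]
    intro ε εpos
    refine ⟨ε / 2, by linarith, ?_⟩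
    intro p q h
    rw [Prod.dist_eq] at h
    have h1 : dist p.1 q.1 < ε / 2 := lt_of_le_of_lt (le_max_left _ _) h
    have h2 : dist p.2 q.2 < ε / 2 := lt_of_le_of_lt (le_max_right _ _) h
    calc dist (p.1 - p.2) (q.1 - q.2) ≤ dist p.1 q.1 + dist p.2 q.2 := dsub _ _ _ _
      _ < ε := by linarith
  -- summability from norm-summability
  have sumG : ∀ f : ℕ → G, Summable (fun k => dist (0 : G) (f k)) → Summable f := by
    intro f hf
    rw [summable_iff_vanishing]
    intro e he
    rcases Metric.mem_nhds_iff.1 he with ⟨ε, εpos, hball⟩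
    rcases summable_iff_vanishing.1 hf (Metric.ball 0 ε) (Metric.ball_mem_nhds _ εpos) with ⟨s, hs⟩
    refine ⟨s, fun u hu => hball ?_⟩
    have h1 := hs u hu
    rw [Metric.mem_ball] at h1 ⊢
    have h2 : dist (0 : G) (∑ i ∈ u, f i) ≤ ∑ i ∈ u, dist (0 : G) (f i) := Nsum u f
    have h3 : ∑ i ∈ u, dist (0 : G) (f i) < ε := by
      rw [Real.dist_eq, sub_zero] at h1
      exact lt_of_le_of_lt (le_abs_self _) h1
    calc dist (∑ i ∈ u, f i) 0 = dist (0 : G) (∑ i ∈ u, f i) := dist_comm _ _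
      _ ≤ ∑ i ∈ u, dist (0 : G) (f i) := h2
      _ < ε := h3
  -- norm of tsum bound
  have Ntsum : ∀ f : ℕ → G, Summable f → Summable (fun k => dist (0 : G) (f k)) →
      dist (0 : G) (∑' k, f k) ≤ ∑' k, dist (0 : G) (f k) := by
    intro f hf hN
    exact le_of_tendsto_of_tendsto' (Filter.Tendsto.dist tendsto_const_nhds hf.hasSum)
      hN.hasSum (fun s => Nsum s f)
  -- small nonzero elements exist
  have key : ∀ ε : ℝ, 0 < ε → ∃ y : G, y ≠ 0 ∧ dist (0 : G) y < ε := by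
    by_contra h
    push_neg at h
    obtain ⟨ε, εpos, hε⟩ := h
    obtain ⟨S, hSc, hSd⟩ := TopologicalSpace.exists_countable_dense G
    have hall : ∀ x : G, x ∈ S := by
      intro x
      rcases Metric.dense_iff.1 hSd x ε εpos with ⟨y, hy, hyS⟩
      rw [Metric.mem_ball] at hy
      have hxy : dist (0 : G) (y - x) = dist x y := by
        have h2 := hinv 0 (y - x) x
        rw [zero_add, sub_add_cancel] at h2
        exact h2.symm
      by_cases hyx : y = x
      · rwa [← hyx]
      · exfalso
        have hne : y - x ≠ 0 := sub_ne_zero.2 hyx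
        have := hε (y - x) hne
        rw [hxy, dist_comm] at this
        linarith
    have : (Set.univ : Set G).Countable := hSc.mono (fun x _ => hall x)
    exact (not_countable_iff.2 ‹Uncountable G›) (Set.countable_univ_iff.1 this)
  have key2 : ∀ x : G, x ≠ 0 → ∃ y : G, y ≠ 0 ∧ dist (0 : G) y < dist 0 x / 3 := by
    intro x hx
    exact key _ (div_pos (dist_pos.2 (Ne.symm hx)) (by norm_num))
  -- construct the sequence
  obtain ⟨x0, hx0⟩ := exists_ne (0 : G)
  have hF : ∀ x : G, ∃ y : G, x ≠ 0 → (y ≠ 0 ∧ dist (0 : G) y < dist 0 x / 3) := by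
    intro x
    by_cases hx : x = 0
    · exact ⟨0, fun h => absurd hx h⟩
    · obtain ⟨y, hy⟩ := key2 x hx
      exact ⟨y, fun _ => hy⟩
  choose g hg using hF
  set t : ℕ → G := fun n => g^[n] x0 with ht_def
  have ht0 : ∀ n, t n ≠ 0 := by
    intro n
    induction n with
    | zero => simpa [ht_def] using hx0
    | succ n ih =>
      have : t (n + 1) = g (t n) := by
        rw [ht_def]; exact Function.iterate_succ_apply' g n x0
      rw [this]
      exact (hg (t n) ih).1
  have H2 : ∀ n, dist (0 : G) (t (n + 1)) < dist 0 (t n) / 3 := by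
    intro n
    have heq : t (n + 1) = g (t n) := by
      rw [ht_def]; exact Function.iterate_succ_apply' g n x0
    rw [heq]
    exact (hg (t n) (ht0 n)).2
  have hpos : ∀ n, 0 < dist (0 : G) (t n) := fun n => dist_pos.2 (Ne.symm (ht0 n))
  have hstep : ∀ k m : ℕ, dist (0 : G) (t (k + m)) ≤ dist 0 (t k) * (1 / 3) ^ m := by
    intro k m
    induction m with
    | zero => simp
    | succ m ih =>
      have h1 := H2 (k + m)
      have h2 : dist (0 : G) (t (k + m)) / 3 ≤ dist 0 (t k) * (1 / 3) ^ m / 3 := by linarith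
      have h3 : dist (0 : G) (t k) * (1 / 3 : ℝ) ^ m / 3 = dist 0 (t k) * (1 / 3) ^ (m + 1) := by
        rw [pow_succ]; ring
      calc dist (0 : G) (t (k + (m + 1))) = dist 0 (t ((k + m) + 1)) := by ring_nf
        _ ≤ dist 0 (t (k + m)) / 3 := le_of_lt (H2 (k + m))
        _ ≤ dist 0 (t k) * (1 / 3) ^ m / 3 := h2
        _ = dist 0 (t k) * (1 / 3) ^ (m + 1) := h3
  -- summability of norms
  have hNs : Summable (fun k => dist (0 : G) (t k)) := by
    apply Summable.of_nonneg_of_le (fun k => dist_nonneg)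
      (f := fun k => dist (0 : G) (t 0) * (1 / 3) ^ k)
    · intro k
      have := hstep 0 k
      rwa [zero_add] at this
    · exact (summable_geometric_of_lt_one (by norm_num) (by norm_num)).mul_left _
  -- injectivity of t
  have hanti : StrictAnti (fun k => dist (0 : G) (t k)) := by
    apply strictAnti_nat_of_succ_lt
    intro n
    exact lt_of_lt_of_le (H2 n) (by linarith [hpos n])
  have tinj : Function.Injective t := by
    intro i j h
    exact hanti.injective (by simp only [h])
  refine ⟨t, tinj, hNs, ?_⟩
  -- injectivity of p
  intro σ τ hpq
  by_contra hne
  have hex : ∃ k, σ k ≠ τ k := Function.ne_iff.1 hne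
  set k := Nat.find hex with hkdef
  have hk : σ k ≠ τ k := Nat.find_spec hex
  have hmin : ∀ j, j < k → σ j = τ j := fun j hj => not_not.1 (Nat.find_min hex hj)
  set a : ℕ → G := fun j => if σ j then t j else 0 with ha_def
  set b : ℕ → G := fun j => if τ j then t j else 0 with hb_def
  have hNa : ∀ (f : ℕ → Bool) (j : ℕ),
      dist (0 : G) (if f j then t j else 0) ≤ dist (0 : G) (t j) := by
    intro f j
    by_cases h : f j <;> simp [h, dist_nonneg]
  have hsa : Summable a :=
    sumG a (Summable.of_nonneg_of_le (fun _ => dist_nonneg) (hNa σ) hNs)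
  have hsb : Summable b :=
    sumG b (Summable.of_nonneg_of_le (fun _ => dist_nonneg) (hNa τ) hNs)
  have hc : Summable (fun j => a j - b j) := hsa.sub hsb
  have hpq' : ∑' j, a j = ∑' j, b j := by
    simpa [ha_def, hb_def] using hpq
  have htsub : ∑' j, (a j - b j) = 0 := by
    rw [Summable.tsum_sub hsa hsb]
    exact sub_eq_zero_of_eq hpq'
  have hc2 : ∑' j, (a (j + k) - b (j + k)) = 0 := by
    have h0 := Summable.sum_add_tsum_nat_add (f := fun j => a j - b j) k hc
    have hz : ∑ i ∈ Finset.range k, (a i - b i) = 0 := by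
      apply Finset.sum_eq_zero
      intro i hi
      have := hmin i (Finset.mem_range.1 hi)
      simp [ha_def, hb_def, this]
    rw [hz, zero_add] at h0
    exact h0.trans htsub
  have hck : Summable (fun j => a (j + k) - b (j + k)) :=
    (summable_nat_add_iff k).2 hc
  have h3 := Summable.tsum_eq_zero_add hck
  rw [hc2] at h3
  simp only [zero_add] at h3
  -- h3 : 0 = (a k - b k) + ∑' n, (a (n + 1 + k) - b (n + 1 + k))
  have hkk : dist (0 : G) (a k - b k) = dist (0 : G) (t k) := by
    rcases hσ : σ k <;> rcases hτ : τ k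
    · exact absurd (hσ.trans hτ.symm) hk
    · simp [ha_def, hb_def, hσ, hτ, Nneg]
    · simp [ha_def, hb_def, hσ, hτ]
    · exact absurd (hσ.trans hτ.symm) hk
  set w : ℕ → G := fun n => a (n + 1 + k) - b (n + 1 + k) with hw_def
  have hcw : Summable w := (summable_nat_add_iff 1).2 hck
  have heq : a k - b k = -∑' n, w n := by
    exact eq_neg_of_add_eq_zero_left h3.symm
  have hw_each : ∀ n, dist (0 : G) (w n) ≤ dist (0 : G) (t k) * (1 / 3) ^ (n + 1) := by
    intro n
    have h1 : dist (0 : G) (w n) ≤ dist (0 : G) (t (n + 1 + k)) := by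
      rcases hσ : σ (n + 1 + k) <;> rcases hτ : τ (n + 1 + k) <;>
        simp [hw_def, ha_def, hb_def, hσ, hτ, Nneg, dist_nonneg, le_refl]
    have hidx : n + 1 + k = k + (n + 1) := by omega
    have h2 : dist (0 : G) (t (n + 1 + k)) ≤ dist (0 : G) (t k) * (1 / 3) ^ (n + 1) := by
      rw [hidx]; exact hstep k (n + 1)
    linarith
  have hgeo : Summable (fun n : ℕ => dist (0 : G) (t k) * (1 / 3 : ℝ) ^ (n + 1)) :=
    (summable_nat_add_iff 1).2
      ((summable_geometric_of_lt_one (by norm_num) (by norm_num)).mul_left _)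
  have hsw : Summable (fun n => dist (0 : G) (w n)) :=
    Summable.of_nonneg_of_le (fun _ => dist_nonneg) hw_each hgeo
  have hbound : dist (0 : G) (a k - b k) ≤ dist (0 : G) (t k) * (1 / 2) := by
    rw [heq, Nneg]
    have hg : ∑' n : ℕ, ((1 : ℝ) / 3) ^ n = (1 - 1 / 3)⁻¹ :=
      tsum_geometric_of_lt_one (by norm_num) (by norm_num)
    calc dist (0 : G) (∑' n, w n) ≤ ∑' n, dist (0 : G) (w n) := Ntsum w hcw hsw
      _ ≤ ∑' n : ℕ, dist (0 : G) (t k) * (1 / 3) ^ (n + 1) := Summable.tsum_le_tsum hw_each hsw hgeo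
      _ = ∑' n : ℕ, (dist (0 : G) (t k) * (1 / 3)) * (1 / 3 : ℝ) ^ n := by
          apply tsum_congr; intro n; ring
      _ = (dist (0 : G) (t k) * (1 / 3)) * ∑' n : ℕ, ((1 : ℝ) / 3) ^ n := tsum_mul_left
      _ = dist (0 : G) (t k) * (1 / 2) := by rw [hg]; ring_nf
  rw [hkk] at hbound
  have := hpos k
  linarith
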